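/- arXiv:2501.02676 — 3 statements merged into one kernel-verified Lean document; each statement's English description precedes it below -/
import Mathlib

section
/- For random variables X and Y on the same probability space with E[Y]=0 and Var[Y] < ∞, the Kolmogorov distance satisfies d_K(X+Y, N(0,1)) ≤ 3·(d_K(X, N(0,1)) + Var[Y]^{1/3}). -/
open MeasureTheory ProbabilityTheory Real NNReal

lemma gaussPDF_le_one (x : ℝ) : gaussianPDF 0 1 x ≤ 1 := by
  rw [gaussianPDF]
  refine ENNReal.ofReal_le_one.2 ?_
  rw [gaussianPDFReal]
  have h1 : (1:ℝ) ≤ √(2 * π * (1:ℝ≥0)) := by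
    rw [show ((1:ℝ≥0):ℝ) = (1:ℝ) by norm_num, mul_one]
    rw [show (1:ℝ) = √1 by simp]
    exact Real.sqrt_le_sqrt (by nlinarith [Real.pi_gt_three])
  have h2 : rexp (-(x - 0) ^ 2 / (2 * (1:ℝ≥0))) ≤ 1 := by
    rw [Real.exp_le_one_iff]
    have : (0:ℝ) ≤ (x - 0)^2 := sq_nonneg _
    have : ((1:ℝ≥0):ℝ) = 1 := by norm_num
    rw [this]
    nlinarith
  have h3 : (0:ℝ) ≤ (√(2 * π * (1:ℝ≥0)))⁻¹ := by positivity
  calc (√(2 * π * (1:ℝ≥0)))⁻¹ * rexp (-(x - 0) ^ 2 / (2 * (1:ℝ≥0)))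
      ≤ 1 * 1 := by
        apply mul_le_mul _ h2 (Real.exp_nonneg _) zero_le_one
        exact inv_le_one_of_one_le₀ h1
    _ = 1 := by norm_num

lemma gauss_lip (a b : ℝ) (hab : a ≤ b) :
    ((gaussianReal 0 1) (Set.Iic b)).toReal ≤ ((gaussianReal 0 1) (Set.Iic a)).toReal + (b - a) := by
  have hunion : Set.Iic b = Set.Iic a ∪ Set.Ioc a b := (Set.Iic_union_Ioc_eq_Iic hab).symm
  have hioc : gaussianReal 0 1 (Set.Ioc a b) ≤ ENNReal.ofReal (b - a) := by
    rw [gaussianReal_apply _ one_ne_zero]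
    calc ∫⁻ x in Set.Ioc a b, gaussianPDF 0 1 x
        ≤ ∫⁻ _ in Set.Ioc a b, 1 := lintegral_mono fun x => gaussPDF_le_one x
      _ = volume (Set.Ioc a b) := setLIntegral_one _
      _ = ENNReal.ofReal (b - a) := Real.volume_Ioc
  have h1 : gaussianReal 0 1 (Set.Iic b) ≤ gaussianReal 0 1 (Set.Iic a) + gaussianReal 0 1 (Set.Ioc a b) := by
    rw [hunion]; exact measure_union_le _ _
  have h2 : ((gaussianReal 0 1) (Set.Iic b)).toReal
      ≤ (gaussianReal 0 1 (Set.Iic a) + gaussianReal 0 1 (Set.Ioc a b)).toReal :=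
    ENNReal.toReal_mono (by finiteness) h1
  rw [ENNReal.toReal_add (by finiteness) (by finiteness)] at h2
  have h3 : (gaussianReal 0 1 (Set.Ioc a b)).toReal ≤ b - a :=
    ENNReal.toReal_le_of_le_ofReal (by linarith) hioc
  linarith

/-- Quantitative Slutsky: for random variables `X`, `Y` on the same probability space
with `E[Y] = 0` and finite variance, the Kolmogorov distance to the standard normal
satisfies `d_K(X+Y, N(0,1)) ≤ 3 (d_K(X, N(0,1)) + Var[Y]^{1/3})`. -/
theorem stmt_0 {Ω : Type*} [MeasurableSpace Ω] (μ : Measure Ω) [IsProbabilityMeasure μ]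
    (X Y : Ω → ℝ) (hX : Measurable X) (hY : Measurable Y)
    (hEY : ∫ ω, Y ω ∂μ = 0) (hVar : MemLp Y 2 μ) :
    (⨆ z : ℝ, |(μ {ω | X ω + Y ω ≤ z}).toReal - ((gaussianReal 0 1) (Set.Iic z)).toReal|)
      ≤ 3 * ((⨆ z : ℝ, |(μ {ω | X ω ≤ z}).toReal - ((gaussianReal 0 1) (Set.Iic z)).toReal|)
        + (variance Y μ) ^ ((1 : ℝ) / 3)) := by
  set Φ : ℝ → ℝ := fun z => ((gaussianReal 0 1) (Set.Iic z)).toReal with hΦ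
  set G : ℝ → ℝ := fun z => (μ {ω | X ω ≤ z}).toReal with hG
  set D : ℝ := ⨆ z : ℝ, |G z - Φ z| with hD
  have hμ1 : ∀ s : Set Ω, (μ s).toReal ≤ 1 := fun s => by
    simpa using ENNReal.toReal_mono ENNReal.one_ne_top prob_le_one
  have hν1 : ∀ z : ℝ, Φ z ≤ 1 := fun z => by
    simpa using ENNReal.toReal_mono ENNReal.one_ne_top (prob_le_one (μ := gaussianReal 0 1))
  have hbdd : BddAbove (Set.range fun z => |G z - Φ z|) := by
    refine ⟨1, ?_⟩
    rintro _ ⟨z, rfl⟩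
    rw [abs_sub_le_iff]
    constructor
    · have := hμ1 {ω | X ω ≤ z}
      have : (0:ℝ) ≤ Φ z := ENNReal.toReal_nonneg
      simp only [hG]
      linarith [hμ1 {ω | X ω ≤ z}]
    · have : (0:ℝ) ≤ G z := ENNReal.toReal_nonneg
      linarith [hν1 z]
  have hD0 : 0 ≤ D := Real.iSup_nonneg fun z => abs_nonneg _
  have hDz : ∀ z : ℝ, |G z - Φ z| ≤ D := fun z => le_ciSup hbdd z
  rcases eq_or_lt_of_le (variance_nonneg Y μ) with hv0 | hvpos
  · -- variance = 0 : Y = 0 a.e.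
    have hev : evariance Y μ = 0 := by
      have hlt := hVar.evariance_lt_top
      have := hVar.ofReal_variance_eq  -- maybe unused
      rw [variance] at hv0
      exact (ENNReal.toReal_eq_zero_iff _).1 hv0.symm |>.resolve_right hlt.ne
    have hY0 : Y =ᵐ[μ] fun _ => (0:ℝ) := by
      have := (evariance_eq_zero_iff hY.aemeasurable).1 hev
      simpa [hEY] using this
    have hset : ∀ z : ℝ, μ {ω | X ω + Y ω ≤ z} = μ {ω | X ω ≤ z} := by
      intro z
      apply measure_congr
      filter_upwards [hY0] with ω hω
      show (X ω + Y ω ≤ z) = (X ω ≤ z)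
      rw [hω, add_zero]
    have hr : (variance Y μ) ^ ((1:ℝ)/3) = 0 := by
      rw [← hv0, Real.zero_rpow (by norm_num)]
    rw [hr]
    refine ciSup_le fun z => ?_
    rw [hset z]
    calc |G z - Φ z| ≤ D := hDz z
      _ ≤ 3 * (D + 0) := by linarith
  · -- variance > 0
    set ε : ℝ := (variance Y μ) ^ ((1:ℝ)/3) with hε
    have hεpos : 0 < ε := Real.rpow_pos_of_pos hvpos _
    have h3 : ε ^ 3 = variance Y μ := by
      rw [hε, ← Real.rpow_natCast ((variance Y μ) ^ ((1:ℝ)/3)) 3,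
        ← Real.rpow_mul (variance_nonneg Y μ)]
      norm_num
    have hdiv : variance Y μ / ε ^ 2 = ε := by
      rw [← h3, pow_succ, mul_comm, mul_div_assoc, div_self (by positivity : (ε:ℝ)^2 ≠ 0), mul_one]
    have hcheb := meas_ge_le_variance_div_sq (μ := μ) hVar hεpos
    simp only [hEY, sub_zero, hdiv] at hcheb
    have hchebR : (μ {ω | ε ≤ |Y ω|}).toReal ≤ ε :=
      ENNReal.toReal_le_of_le_ofReal hεpos.le hcheb
    refine ciSup_le fun z => ?_
    set F : ℝ := (μ {ω | X ω + Y ω ≤ z}).toReal with hF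
    -- upper bound
    have hsub1 : {ω | X ω + Y ω ≤ z} ⊆ {ω | X ω ≤ z + ε} ∪ {ω | ε ≤ |Y ω|} := by
      intro ω hω
      by_cases h : X ω ≤ z + ε
      · exact Or.inl h
      · right
        push_neg at h
        simp only [Set.mem_setOf_eq] at hω ⊢
        rw [le_abs]
        right
        linarith
    have hup : F ≤ G (z + ε) + ε := by
      have h1 : μ {ω | X ω + Y ω ≤ z} ≤ μ {ω | X ω ≤ z + ε} + μ {ω | ε ≤ |Y ω|} :=
        le_trans (measure_mono hsub1) (measure_union_le _ _)
      have h2 : F ≤ (μ {ω | X ω ≤ z + ε} + μ {ω | ε ≤ |Y ω|}).toReal :=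
        ENNReal.toReal_mono (by finiteness) h1
      rw [ENNReal.toReal_add (by finiteness) (by finiteness)] at h2
      have := hchebR
      simp only [hG]
      linarith
    -- lower bound
    have hsub2 : {ω | X ω ≤ z - ε} ⊆ {ω | X ω + Y ω ≤ z} ∪ {ω | ε ≤ |Y ω|} := by
      intro ω hω
      by_cases h : X ω + Y ω ≤ z
      · exact Or.inl h
      · right
        push_neg at h
        simp only [Set.mem_setOf_eq] at hω ⊢
        rw [le_abs]
        left
        linarith
    have hlow : G (z - ε) ≤ F + ε := by
      have h1 : μ {ω | X ω ≤ z - ε} ≤ μ {ω | X ω + Y ω ≤ z} + μ {ω | ε ≤ |Y ω|} :=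
        le_trans (measure_mono hsub2) (measure_union_le _ _)
      have h2 : G (z - ε) ≤ (μ {ω | X ω + Y ω ≤ z} + μ {ω | ε ≤ |Y ω|}).toReal :=
        ENNReal.toReal_mono (by finiteness) h1
      rw [ENNReal.toReal_add (by finiteness) (by finiteness)] at h2
      simp only [hG] at h2 ⊢
      linarith
    have hlip1 : Φ (z + ε) ≤ Φ z + ε := by
      have := gauss_lip z (z + ε) (by linarith)
      simp only [hΦ] at this ⊢
      linarith
    have hlip2 : Φ z ≤ Φ (z - ε) + ε := by
      have := gauss_lip (z - ε) z (by linarith)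
      simp only [hΦ] at this ⊢
      linarith
    have hg1 := hDz (z + ε)
    have hg2 := hDz (z - ε)
    rw [abs_sub_le_iff] at hg1 hg2
    rw [abs_sub_le_iff]
    constructor
    · calc F - Φ z ≤ G (z + ε) + ε - Φ z := by linarith
        _ ≤ 3 * (D + ε) := by linarith [hg1.1, hlip1, hεpos]
    · calc Φ z - F ≤ Φ z - G (z - ε) + ε := by linarith
        _ ≤ 3 * (D + ε) := by linarith [hg2.2, hlip2, hεpos]
end

section
/- Let d ≥ 2 and g : [0,1] → [0,∞) satisfy g(0)=0, g nondecreasing, g(a) ≤ θ_{d-1}·a, and for every ε ∈ (0,1/2) there is δ ∈ (0,1) with g(a) ≥ θ_{d-1}(a − d a^3) for a ∈ (0,δ). Let t_n → ∞ be a sequence of positive reals. Then θ_{d-1}·t_n·∫_0^1 e^{−t_n g(a)} da = 1 + O(((log t_n)/t_n)^2) as n → ∞. -/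
set_option maxHeartbeats 1000000
open Filter MeasureTheory

lemma exp_int (c : ℝ) (hc : 0 < c) (b : ℝ) :
    ∫ x in (0:ℝ)..b, Real.exp (-(c*x)) = (1 - Real.exp (-(c*b)))/c := by
  have h : ∀ x ∈ Set.uIcc (0:ℝ) b,
      HasDerivAt (fun y => -(Real.exp (-(c*y)))/c) (Real.exp (-(c*x))) x := by
    intro x _
    have h1 : HasDerivAt (fun y : ℝ => -(c*y)) (-c) x := by
      simpa using ((hasDerivAt_id x).const_mul c).fun_neg
    have h2 := (h1.exp.fun_neg).div_const c
    refine h2.congr_deriv ?_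
    rw [mul_neg, neg_neg, mul_div_assoc, div_self hc.ne', mul_one]
  have hcont : IntervalIntegrable (fun x => Real.exp (-(c*x))) volume 0 b :=
    (Real.continuous_exp.comp ((continuous_const.mul continuous_id).neg)).intervalIntegrable _ _
  rw [intervalIntegral.integral_eq_sub_of_hasDerivAt h hcont]
  simp [Real.exp_zero]
  ring

/-- Laplace-type estimate: if `g : [0,1] → [0,∞)` satisfies `g(0)=0`, `g` nondecreasing,
`g(a) ≤ θ_{d-1} a`, and for every `ε ∈ (0,1/2)` there is `δ ∈ (0,1)` with
`g(a) ≥ θ_{d-1}(a - d a³)` on `(0,δ)`, and `t_n → ∞`, then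
`θ_{d-1} t_n ∫_0^1 e^{-t_n g(a)} da = 1 + O((log t_n / t_n)²)`. -/
theorem stmt_8 (d : ℕ) (hd : 2 ≤ d)
    (θ : ℝ) (hθ : θ = Real.pi ^ (((d : ℝ) - 1) / 2) / Real.Gamma (1 + ((d : ℝ) - 1) / 2))
    (g : ℝ → ℝ) (hg_nonneg : ∀ a ∈ Set.Icc (0 : ℝ) 1, 0 ≤ g a)
    (hg0 : g 0 = 0) (hg_mono : MonotoneOn g (Set.Icc (0 : ℝ) 1))
    (hg_upper : ∀ a ∈ Set.Icc (0 : ℝ) 1, g a ≤ θ * a)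
    (hg_lower : ∀ ε ∈ Set.Ioo (0 : ℝ) (1 / 2), ∃ δ ∈ Set.Ioo (0 : ℝ) 1,
      ∀ a ∈ Set.Ioo (0 : ℝ) δ, θ * (a - (d : ℝ) * a ^ 3) ≤ g a)
    (t : ℕ → ℝ) (ht_pos : ∀ n, 0 < t n) (ht : Tendsto t atTop atTop) :
    ∃ C > (0 : ℝ), ∀ᶠ n in atTop,
      |θ * t n * (∫ a in (0 : ℝ)..1, Real.exp (-(t n) * g a)) - 1|
        ≤ C * (Real.log (t n) / t n) ^ 2 := by
  have hθpos : 0 < θ := by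
    rw [hθ]
    apply div_pos (Real.rpow_pos_of_pos Real.pi_pos _)
    apply Real.Gamma_pos_of_pos
    have h2 : (2:ℝ) ≤ (d:ℝ) := by exact_mod_cast hd
    linarith
  have hdnn : (0:ℝ) ≤ (d:ℝ) := Nat.cast_nonneg d
  obtain ⟨δ, hδmem, hδ⟩ := hg_lower (1/4) ⟨by norm_num, by norm_num⟩
  refine ⟨72*(d:ℝ)/θ^2 + θ + 1, by positivity, ?_⟩
  have hb_tendsto : Tendsto (fun s : ℝ => 6 * Real.log s / (θ * s)) atTop (nhds 0) := by
    have h0 := Real.isLittleO_log_id_atTop.tendsto_div_nhds_zero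
    have h1 : Tendsto (fun s : ℝ => (6/θ) * (Real.log s / s)) atTop (nhds ((6/θ) * 0)) :=
      h0.const_mul _
    rw [mul_zero] at h1
    refine h1.congr fun s => ?_
    field_simp
  have hE : ∀ᶠ s : ℝ in atTop, (1 < s ∧ 1 ≤ Real.log s ∧ 6 * Real.log s / (θ * s) < δ ∧
      (d:ℝ) * (6 * Real.log s / (θ * s))^2 ≤ 1/2 ∧ Real.exp (-(θ * s)) * s^2 ≤ 1) := by
    have h1 : ∀ᶠ s : ℝ in atTop, 1 < s := eventually_gt_atTop 1
    have h2 : ∀ᶠ s : ℝ in atTop, 1 ≤ Real.log s :=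
      Real.tendsto_log_atTop.eventually_ge_atTop 1
    have h3 : ∀ᶠ s : ℝ in atTop, 6 * Real.log s / (θ * s) < δ :=
      hb_tendsto.eventually_lt_const hδmem.1
    have h4 : ∀ᶠ s : ℝ in atTop, (d:ℝ) * (6 * Real.log s / (θ * s))^2 ≤ 1/2 := by
      have := ((hb_tendsto.pow 2).const_mul (d:ℝ))
      rw [show ((0:ℝ)^2 = 0) by norm_num, mul_zero] at this
      exact this.eventually_le_const (by norm_num)
    have h5 : ∀ᶠ s : ℝ in atTop, Real.exp (-(θ * s)) * s^2 ≤ 1 := by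
      have hmul : Tendsto (fun s : ℝ => θ * s) atTop atTop :=
        Tendsto.const_mul_atTop hθpos tendsto_id
      have h0 := (Real.tendsto_pow_mul_exp_neg_atTop_nhds_zero 2).comp hmul
      have h1 : Tendsto (fun s : ℝ => (1/θ^2) * ((θ*s)^2 * Real.exp (-(θ*s)))) atTop
          (nhds ((1/θ^2) * 0)) := h0.const_mul _
      rw [mul_zero] at h1
      have h2 : Tendsto (fun s : ℝ => Real.exp (-(θ * s)) * s^2) atTop (nhds 0) := by
        refine h1.congr fun s => ?_
        field_simp
      exact h2.eventually_le_const (by norm_num)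
    filter_upwards [h1, h2, h3, h4, h5] with s a1 a2 a3 a4 a5
    exact ⟨a1, a2, a3, a4, a5⟩
  filter_upwards [ht.eventually hE] with n hn
  set s := t n with hs
  obtain ⟨hs1, hlog1, hbδ, hdb, hexps⟩ := hn
  have hs0 : 0 < s := lt_trans one_pos hs1
  have hlogpos : 0 < Real.log s := lt_of_lt_of_le one_pos hlog1
  set b := 6 * Real.log s / (θ * s) with hbdef
  have hb0 : 0 < b := div_pos (by positivity) (by positivity)
  have hb1 : b ≤ 1 := le_of_lt (lt_trans hbδ hδmem.2)
  set f := fun a : ℝ => Real.exp (-s * g a) with hfdef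
  set L := Real.log s with hL
  -- integrability
  have hgmeas : AEMeasurable g (volume.restrict (Set.Icc (0:ℝ) 1)) :=
    aemeasurable_restrict_of_monotoneOn measurableSet_Icc hg_mono
  have hfmeas : AEStronglyMeasurable f (volume.restrict (Set.Icc (0:ℝ) 1)) :=
    (Real.measurable_exp.comp_aemeasurable (hgmeas.const_mul (-s))).aestronglyMeasurable
  have hfint : IntegrableOn f (Set.Icc (0:ℝ) 1) volume := by
    refine ⟨hfmeas, ?_⟩
    apply HasFiniteIntegral.of_bounded (C := 1)
    filter_upwards [ae_restrict_mem measurableSet_Icc] with a ha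
    rw [Real.norm_eq_abs, abs_of_pos (Real.exp_pos _)]
    have h1 : -s * g a ≤ 0 := by
      have := hg_nonneg a ha
      nlinarith
    calc Real.exp (-s * g a) ≤ Real.exp 0 := Real.exp_le_exp.2 h1
    _ = 1 := Real.exp_zero
  have hII : ∀ u v : ℝ, u ≤ v → Set.Ioc u v ⊆ Set.Icc (0:ℝ) 1 →
      IntervalIntegrable f volume u v := fun u v huv hsub =>
    (intervalIntegrable_iff_integrableOn_Ioc_of_le huv).2 (hfint.mono_set hsub)
  have hI01 : IntervalIntegrable f volume 0 1 :=
    hII 0 1 (by norm_num) (Set.Ioc_subset_Icc_self)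
  have hI0b : IntervalIntegrable f volume 0 b :=
    hII 0 b hb0.le (Set.Ioc_subset_Icc_self.trans (Set.Icc_subset_Icc le_rfl hb1))
  have hIb1 : IntervalIntegrable f volume b 1 :=
    hII b 1 hb1 (fun x hx => ⟨le_trans hb0.le (le_of_lt hx.1), hx.2⟩)
  -- lower bound
  have hlow : 1 - Real.exp (-(θ*s)) ≤ θ * s * ∫ a in (0:ℝ)..1, f a := by
    have hmono : ∫ x in (0:ℝ)..1, Real.exp (-(θ*s*x)) ≤ ∫ a in (0:ℝ)..1, f a := by
      apply intervalIntegral.integral_mono_on (by norm_num)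
        ((Real.continuous_exp.comp ((continuous_const.mul continuous_id).neg)).intervalIntegrable _ _)
        hI01
      intro x hx
      apply Real.exp_le_exp.2
      simp only [Pi.neg_apply, Pi.mul_apply, id_eq]
      nlinarith [mul_le_mul_of_nonneg_left (hg_upper x hx) hs0.le]
    have heq : ∫ x in (0:ℝ)..1, Real.exp (-(θ*s*x)) = (1 - Real.exp (-(θ*s)))/(θ*s) := by
      have := exp_int (θ*s) (by positivity) 1
      simpa using this
    rw [heq] at hmono
    have h2 := mul_le_mul_of_nonneg_left hmono (le_of_lt (show (0:ℝ) < θ*s by positivity))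
    calc 1 - Real.exp (-(θ*s)) = θ*s * ((1 - Real.exp (-(θ*s)))/(θ*s)) := by
          field_simp
    _ ≤ θ * s * ∫ a in (0:ℝ)..1, f a := h2
  -- split
  have hsplit : (∫ a in (0:ℝ)..1, f a) = (∫ a in (0:ℝ)..b, f a) + ∫ a in b..1, f a :=
    (intervalIntegral.integral_add_adjacent_intervals hI0b hIb1).symm
  -- main part upper bound
  set β := θ * s * (1 - (d:ℝ) * b^2) with hβdef
  have h12 : (0:ℝ) < 1 - (d:ℝ)*b^2 := by linarith
  have hβpos : 0 < β := by positivity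
  have hup1 : (∫ a in (0:ℝ)..b, f a) ≤ 1/β := by
    have hmono : (∫ a in (0:ℝ)..b, f a) ≤ ∫ x in (0:ℝ)..b, Real.exp (-(β*x)) := by
      apply intervalIntegral.integral_mono_on hb0.le hI0b
        ((Real.continuous_exp.comp ((continuous_const.mul continuous_id).neg)).intervalIntegrable _ _)
      intro x hx
      apply Real.exp_le_exp.2
      simp only [Pi.neg_apply, Pi.mul_apply, id_eq]
      rcases eq_or_lt_of_le hx.1 with h0 | h0
      · rw [← h0]; simp [hg0]
      · have hxδ : x ∈ Set.Ioo (0:ℝ) δ := ⟨h0, lt_of_le_of_lt hx.2 hbδ⟩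
        have hlo := hδ x hxδ
        have hx2 : x^2 ≤ b^2 := by nlinarith [hx.2, h0.le]
        have hx3 : x^3 ≤ b^2 * x := by nlinarith [mul_le_mul_of_nonneg_right hx2 h0.le]
        have hmul1 : s * (θ * (x - (d:ℝ)*x^3)) ≤ s * g x :=
          mul_le_mul_of_nonneg_left hlo hs0.le
        have hmul2 : (0:ℝ) ≤ θ*s*(d:ℝ)*(b^2*x - x^3) :=
          mul_nonneg (by positivity) (by linarith)
        have hβx : β * x ≤ s * g x := by
          rw [hβdef]
          nlinarith [hmul1, hmul2]
        linarith
    have heq : ∫ x in (0:ℝ)..b, Real.exp (-(β*x)) = (1 - Real.exp (-(β*b)))/β :=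
      exp_int β hβpos b
    rw [heq] at hmono
    have h3 : (1 - Real.exp (-(β*b)))/β ≤ 1/β :=
      (div_le_div_iff_of_pos_right hβpos).2 (by linarith [Real.exp_pos (-(β*b))])
    linarith
  -- tail upper bound
  have hup2 : (∫ a in b..1, f a) ≤ Real.exp (-(s * g b)) := by
    have hgbmem : b ∈ Set.Icc (0:ℝ) 1 := ⟨hb0.le, hb1⟩
    have hmono : (∫ a in b..1, f a) ≤ ∫ _x in b..1, Real.exp (-(s * g b)) := by
      apply intervalIntegral.integral_mono_on hb1 hIb1 intervalIntegrable_const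
      intro x hx
      apply Real.exp_le_exp.2
      have hgm : g b ≤ g x := hg_mono hgbmem ⟨le_trans hb0.le hx.1, hx.2⟩ hx.1
      nlinarith [mul_le_mul_of_nonneg_left hgm hs0.le]
    rw [intervalIntegral.integral_const, smul_eq_mul] at hmono
    nlinarith [Real.exp_pos (-(s*g b)), hb0, hmono]
  have hgb3 : 3 * L ≤ s * g b := by
    have hbmem : b ∈ Set.Ioo 0 δ := ⟨hb0, hbδ⟩
    have hlo := hδ b hbmem
    have hθsb : θ * s * b = 6 * L := by
      rw [hbdef]; field_simp
    have h1 : s*(θ*(b - (d:ℝ)*b^3)) ≤ s * g b := mul_le_mul_of_nonneg_left hlo hs0.le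
    have h2 : 6*L*((d:ℝ)*b^2) ≤ 6*L*(1/2) :=
      mul_le_mul_of_nonneg_left hdb (by positivity)
    have h3 : s*(θ*(b - (d:ℝ)*b^3)) = θ*s*b - (θ*s*b)*((d:ℝ)*b^2) := by ring
    rw [hθsb] at h3
    linarith
  have hexpgb : Real.exp (-(s * g b)) ≤ (s^3)⁻¹ := by
    have hls : Real.log (s^(3:ℕ)) = 3 * L := by
      rw [Real.log_pow]; push_cast; ring
    have h4 : Real.exp (-(3*L)) = (s^3)⁻¹ := by
      rw [show -(3*L) = Real.log ((s^(3:ℕ))⁻¹) by rw [Real.log_inv, hls],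
        Real.exp_log (by positivity)]
    calc Real.exp (-(s * g b)) ≤ Real.exp (-(3*L)) := Real.exp_le_exp.2 (by linarith)
    _ = (s^3)⁻¹ := h4
  -- combine
  have hfrac : θ*s*(1/β) = (1 - (d:ℝ)*b^2)⁻¹ := by
    rw [hβdef]; field_simp
  have hinv : (1 - (d:ℝ)*b^2)⁻¹ ≤ 1 + 2*((d:ℝ)*b^2) := by
    have hu := mul_inv_cancel₀ (ne_of_gt h12)
    have hxnn : (0:ℝ) ≤ (d:ℝ)*b^2 := by positivity
    have hprod : (0:ℝ) ≤ ((d:ℝ)*b^2) * (1 - 2*((d:ℝ)*b^2)) :=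
      mul_nonneg hxnn (by linarith)
    nlinarith [hu, hprod, inv_pos.2 h12]
  have hA : θ*s*(∫ a in (0:ℝ)..b, f a) ≤ 1 + 2*((d:ℝ)*b^2) := by
    have := mul_le_mul_of_nonneg_left hup1 (show (0:ℝ) ≤ θ*s by positivity)
    rw [hfrac] at this
    linarith
  have hB : θ*s*(∫ a in b..1, f a) ≤ θ * (L/s)^2 := by
    have h5 : θ*s*(∫ a in b..1, f a) ≤ θ*s*(s^3)⁻¹ := by
      have := mul_le_mul_of_nonneg_left (le_trans hup2 hexpgb)
        (show (0:ℝ) ≤ θ*s by positivity)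
      linarith
    have h6 : θ*s*(s^3)⁻¹ = θ/s^2 := by field_simp
    have h7 : θ/s^2 ≤ θ*(L/s)^2 := by
      rw [div_pow, ← mul_div_assoc]
      refine (div_le_div_iff_of_pos_right (by positivity : (0:ℝ) < s^2)).2 ?_
      nlinarith [mul_nonneg hθpos.le (show (0:ℝ) ≤ L^2-1 by nlinarith [sq_nonneg (L-1)])]
    linarith [h5, h6.le, h7]
  have h2db : 2*((d:ℝ)*b^2) = 72*(d:ℝ)/θ^2 * (L/s)^2 := by
    rw [hbdef]; field_simp; ring
  have hLs : (1:ℝ)/s^2 ≤ (L/s)^2 := by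
    rw [div_pow]
    exact (div_le_div_iff_of_pos_right (by positivity : (0:ℝ) < s^2)).2 (by nlinarith [sq_nonneg (L-1)])
  have hexpbd : Real.exp (-(θ*s)) ≤ (L/s)^2 := by
    have : Real.exp (-(θ*s)) ≤ 1/s^2 := by
      rw [le_div_iff₀ (by positivity)]
      linarith
    linarith [hLs]
  have hLsq : (0:ℝ) ≤ (L/s)^2 := sq_nonneg _
  rw [abs_le]
  constructor
  · have : θ * s * ∫ a in (0:ℝ)..1, f a ≥ 1 - (L/s)^2 := by linarith [hlow, hexpbd]
    nlinarith [hLsq, hdnn, hθpos, sq_nonneg θ]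
  · have hup : θ * s * ∫ a in (0:ℝ)..1, f a ≤ 1 + (72*(d:ℝ)/θ^2 + θ) * (L/s)^2 := by
      rw [hsplit, mul_add]
      linarith [hA, hB, h2db]
    nlinarith [hLsq]
end

section
/- Suppose A = [0,1]^2 and let x, y ∈ A with x ≺ y (meaning the ℓ^1 distance from x to its nearest corner of A is less than that of y, or these distances are equal and x precedes y lexicographically). Then there exist constants δ_1 > 0 and s_0 > 0 (depending only on A) such that for all s ∈ (0, s_0): if ‖y−x‖ ≥ s then λ(A ∩ B_s(y) \ B_s(x)) ≥ 2δ_1 s^2, and if ‖y−x‖ ≤ 3s then λ(A ∩ B_s(y) \ B_s(x)) ≥ 2δ_1 s·‖y−x‖. -/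
open MeasureTheory

/-- The `ℓ¹` distance from `x ∈ ℝ²` to the nearest corner of the unit square. -/
noncomputable def cornerL1Dist (x : EuclideanSpace ℝ (Fin 2)) : ℝ :=
  min (min (|x 0 - 0| + |x 1 - 0|) (|x 0 - 0| + |x 1 - 1|))
    (min (|x 0 - 1| + |x 1 - 0|) (|x 0 - 1| + |x 1 - 1|))

/-- The ordering `≺` on the unit square: `x ≺ y` iff the `ℓ¹` distance from `x` to its
nearest corner is less than that of `y`, or they are equal and `x` strictly precedes `y`
lexicographically. -/
def squarePrec (x y : EuclideanSpace ℝ (Fin 2)) : Prop :=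
  cornerL1Dist x < cornerL1Dist y ∨
    (cornerL1Dist x = cornerL1Dist y ∧ (x 0 < y 0 ∨ (x 0 = y 0 ∧ x 1 < y 1)))

open Set


private lemma min_lip {a b c : ℝ} (h1 : b - a ≤ c) (h2 : a - b ≤ c) :
    min b (1-b) ≤ min a (1-a) + c := by
  rcases le_total a (1-a) with h | h
  · rw [min_eq_left h]
    calc min b (1-b) ≤ b := min_le_left _ _
      _ ≤ a + c := by linarith
  · rw [min_eq_right h]
    calc min b (1-b) ≤ 1-b := min_le_right _ _
      _ ≤ (1-a) + c := by linarith

private lemma sq_contra {d a b : ℝ} (hd : 0 < d) (h : a^2 + b^2 = d^2)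
    (ha1 : a ≤ d/2) (ha2 : -(d/2) ≤ a) (hb1 : b ≤ d/2) (hb2 : -(d/2) ≤ b) : False := by
  nlinarith [sq_le_sq' ha2 ha1, sq_le_sq' hb2 hb1, mul_pos hd hd]

private lemma dir_lemma {s d x0 x1 y0 y1 : ℝ}
    (hx0 : x0 ∈ Icc (0:ℝ) 1) (hx1 : x1 ∈ Icc (0:ℝ) 1)
    (hy0 : y0 ∈ Icc (0:ℝ) 1) (hy1 : y1 ∈ Icc (0:ℝ) 1)
    (hg : min x0 (1-x0) + min x1 (1-x1) ≤ min y0 (1-y0) + min y1 (1-y1))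
    (hd2 : (y0-x0)^2 + (y1-x1)^2 = d^2)
    (hd0 : 0 < d) (hds : d ≤ 2*s) (hs0 : 0 < s) (hs1 : s ≤ 1/100) :
    (d/2 ≤ y0 - x0 ∧ y0 + s ≤ 1) ∨ (d/2 ≤ x0 - y0 ∧ s ≤ y0) ∨
    (d/2 ≤ y1 - x1 ∧ y1 + s ≤ 1) ∨ (d/2 ≤ x1 - y1 ∧ s ≤ y1) := by
  obtain ⟨hx00, hx01⟩ := hx0
  obtain ⟨hx10, hx11⟩ := hx1
  obtain ⟨hy00, hy01⟩ := hy0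
  obtain ⟨hy10, hy11⟩ := hy1
  by_contra hcon
  push_neg at hcon
  obtain ⟨h1, h2, h3, h4⟩ := hcon
  -- coordinate differences are bounded by d
  have hw0a : y0 - x0 ≤ d := by nlinarith [sq_nonneg (y1-x1)]
  have hw0b : x0 - y0 ≤ d := by nlinarith [sq_nonneg (y1-x1)]
  have hw1a : y1 - x1 ≤ d := by nlinarith [sq_nonneg (y0-x0)]
  have hw1b : x1 - y1 ≤ d := by nlinarith [sq_nonneg (y0-x0)]
  rcases lt_or_ge y0 s with c0lo | c0a
  · rcases lt_or_ge y1 s with c1lo | c1a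
    · -- (lo, lo)
      have r0 : y0 - x0 < d/2 := by
        by_contra h; push_neg at h; linarith [h1 h]
      have r1 : y1 - x1 < d/2 := by
        by_contra h; push_neg at h; linarith [h3 h]
      rw [min_eq_left (by linarith : x0 ≤ 1 - x0), min_eq_left (by linarith : x1 ≤ 1 - x1),
        min_eq_left (by linarith : y0 ≤ 1 - y0), min_eq_left (by linarith : y1 ≤ 1 - y1)] at hg
      exact sq_contra hd0 hd2 r0.le (by linarith) r1.le (by linarith)
    · rcases lt_or_ge (1-s) y1 with c1hi | c1m
      · -- (lo, hi)
        have r0 : y0 - x0 < d/2 := by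
          by_contra h; push_neg at h; linarith [h1 h]
        have r1 : x1 - y1 < d/2 := by
          by_contra h; push_neg at h; linarith [h4 h]
        rw [min_eq_left (by linarith : x0 ≤ 1 - x0), min_eq_right (by linarith : 1 - x1 ≤ x1),
          min_eq_left (by linarith : y0 ≤ 1 - y0),
          min_eq_right (by linarith : 1 - y1 ≤ y1)] at hg
        exact sq_contra hd0 hd2 r0.le (by linarith) (by linarith) (by linarith)
      · -- (lo, mid)
        have r0 : y0 - x0 < d/2 := by
          by_contra h; push_neg at h; linarith [h1 h]
        have r1 : y1 - x1 < d/2 := by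
          by_contra h; push_neg at h; linarith [h3 h]
        have r1' : x1 - y1 < d/2 := by
          by_contra h; push_neg at h; linarith [h4 h]
        have hlip : min y1 (1-y1) ≤ min x1 (1-x1) + d/2 := min_lip r1.le r1'.le
        rw [min_eq_left (by linarith : x0 ≤ 1 - x0),
          min_eq_left (by linarith : y0 ≤ 1 - y0)] at hg
        exact sq_contra hd0 hd2 r0.le (by linarith) r1.le (by linarith)
  · rcases lt_or_ge (1-s) y0 with c0hi | c0m
    · rcases lt_or_ge y1 s with c1lo | c1a
      · -- (hi, lo)
        have r0 : x0 - y0 < d/2 := by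
          by_contra h; push_neg at h; linarith [h2 h]
        have r1 : y1 - x1 < d/2 := by
          by_contra h; push_neg at h; linarith [h3 h]
        rw [min_eq_right (by linarith : 1 - x0 ≤ x0), min_eq_left (by linarith : x1 ≤ 1 - x1),
          min_eq_right (by linarith : 1 - y0 ≤ y0),
          min_eq_left (by linarith : y1 ≤ 1 - y1)] at hg
        exact sq_contra hd0 hd2 (by linarith) (by linarith) r1.le (by linarith)
      · rcases lt_or_ge (1-s) y1 with c1hi | c1m
        · -- (hi, hi)
          have r0 : x0 - y0 < d/2 := by
            by_contra h; push_neg at h; linarith [h2 h]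
          have r1 : x1 - y1 < d/2 := by
            by_contra h; push_neg at h; linarith [h4 h]
          rw [min_eq_right (by linarith : 1 - x0 ≤ x0), min_eq_right (by linarith : 1 - x1 ≤ x1),
            min_eq_right (by linarith : 1 - y0 ≤ y0),
            min_eq_right (by linarith : 1 - y1 ≤ y1)] at hg
          exact sq_contra hd0 hd2 (by linarith) (by linarith) (by linarith) (by linarith)
        · -- (hi, mid)
          have r0 : x0 - y0 < d/2 := by
            by_contra h; push_neg at h; linarith [h2 h]
          have r1 : y1 - x1 < d/2 := by
            by_contra h; push_neg at h; linarith [h3 h]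
          have r1' : x1 - y1 < d/2 := by
            by_contra h; push_neg at h; linarith [h4 h]
          have hlip : min y1 (1-y1) ≤ min x1 (1-x1) + d/2 := min_lip r1.le r1'.le
          rw [min_eq_right (by linarith : 1 - x0 ≤ x0),
            min_eq_right (by linarith : 1 - y0 ≤ y0)] at hg
          exact sq_contra hd0 hd2 (by linarith) (by linarith) r1.le (by linarith)
    · -- y0 mid
      have r0 : y0 - x0 < d/2 := by
        by_contra h; push_neg at h; linarith [h1 h]
      have r0' : x0 - y0 < d/2 := by
        by_contra h; push_neg at h; linarith [h2 h]
      rcases lt_or_ge y1 s with c1lo | c1a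
      · -- (mid, lo)
        have r1 : y1 - x1 < d/2 := by
          by_contra h; push_neg at h; linarith [h3 h]
        have hlip : min y0 (1-y0) ≤ min x0 (1-x0) + d/2 := min_lip r0.le r0'.le
        rw [min_eq_left (by linarith : x1 ≤ 1 - x1),
          min_eq_left (by linarith : y1 ≤ 1 - y1)] at hg
        exact sq_contra hd0 hd2 r0.le (by linarith) r1.le (by linarith)
      · rcases lt_or_ge (1-s) y1 with c1hi | c1m
        · -- (mid, hi)
          have r1 : x1 - y1 < d/2 := by
            by_contra h; push_neg at h; linarith [h4 h]
          have hlip : min y0 (1-y0) ≤ min x0 (1-x0) + d/2 := min_lip r0.le r0'.le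
          rw [min_eq_right (by linarith : 1 - x1 ≤ x1),
            min_eq_right (by linarith : 1 - y1 ≤ y1)] at hg
          exact sq_contra hd0 hd2 r0.le (by linarith) (by linarith) (by linarith)
        · -- (mid, mid)
          have r1 : y1 - x1 < d/2 := by
            by_contra h; push_neg at h; linarith [h3 h]
          have r1' : x1 - y1 < d/2 := by
            by_contra h; push_neg at h; linarith [h4 h]
          exact sq_contra hd0 hd2 r0.le (by linarith) r1.le (by linarith)

private lemma mem_cb_iff {z y : EuclideanSpace ℝ (Fin 2)} {s : ℝ} (hs : 0 ≤ s) :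
    z ∈ Metric.closedBall y s ↔ (z 0 - y 0)^2 + (z 1 - y 1)^2 ≤ s^2 := by
  have hd : dist z y = Real.sqrt ((z 0 - y 0)^2 + (z 1 - y 1)^2) := by
    rw [EuclideanSpace.dist_eq, Fin.sum_univ_two]
    norm_num [Real.dist_eq, sq_abs]
  rw [Metric.mem_closedBall, hd,
    show s = Real.sqrt (s^2) by rw [Real.sqrt_sq hs],
    Real.sqrt_le_sqrt_iff (by positivity)]
  rw [Real.sqrt_sq hs]

private lemma vp2 : MeasurePreserving (fun z : EuclideanSpace ℝ (Fin 2) => (z 0, z 1))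
    volume volume := by
  have h := (volume_preserving_finTwoArrow ℝ).comp
    (EuclideanSpace.volume_preserving_symm_measurableEquiv_toLp (Fin 2))
  have he : (⇑(MeasurableEquiv.finTwoArrow) ∘ ⇑(MeasurableEquiv.toLp 2 (Fin 2 → ℝ)).symm)
      = fun z : EuclideanSpace ℝ (Fin 2) => (z 0, z 1) := by
    funext z
    simp [MeasurableEquiv.finTwoArrow]
  rwa [he] at h

private lemma vol_region (φ : ℝ → ℝ) (hφ : Measurable φ) (a b c : ℝ) (hc : 0 ≤ c) :
    volume (regionBetween φ (fun p => φ p + c) (Ioo a b)) = ENNReal.ofReal ((b - a) * c) := by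
  rw [Measure.volume_eq_prod,
    volume_regionBetween_eq_lintegral' (g := fun p => φ p + c) hφ (by exact hφ.add measurable_const) measurableSet_Ioo]
  calc ∫⁻ y in Ioo a b, ENNReal.ofReal (((fun p => φ p + c) - φ) y)
      = ∫⁻ _ in Ioo a b, ENNReal.ofReal c := by
        apply lintegral_congr; intro p; simp
    _ = ENNReal.ofReal c * volume (Ioo a b) := by rw [setLIntegral_const]
    _ = ENNReal.ofReal ((b - a) * c) := by
        rw [Real.volume_Ioo, ← ENNReal.ofReal_mul hc]
        ring_nf

/-- volume of a slab whose base is coordinate 0 and fiber is coordinate 1 -/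
private lemma vol_slab_base0 (φ : ℝ → ℝ) (hφ : Measurable φ) (a b c : ℝ) (hc : 0 ≤ c) :
    volume {z : EuclideanSpace ℝ (Fin 2) |
      z 0 ∈ Ioo a b ∧ z 1 ∈ Ioo (φ (z 0)) (φ (z 0) + c)} = ENNReal.ofReal ((b - a) * c) := by
  have hset : {z : EuclideanSpace ℝ (Fin 2) |
      z 0 ∈ Ioo a b ∧ z 1 ∈ Ioo (φ (z 0)) (φ (z 0) + c)}
      = (fun z : EuclideanSpace ℝ (Fin 2) => (z 0, z 1)) ⁻¹'
        (regionBetween φ (fun p => φ p + c) (Ioo a b)) := by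
    ext z; simp [regionBetween]
  rw [hset, vp2.measure_preimage
    (measurableSet_regionBetween (g := fun p => φ p + c) hφ (by exact hφ.add measurable_const) measurableSet_Ioo).nullMeasurableSet,
    vol_region φ hφ a b c hc]

/-- volume of a slab whose base is coordinate 1 and fiber is coordinate 0 -/
private lemma vol_slab_base1 (φ : ℝ → ℝ) (hφ : Measurable φ) (a b c : ℝ) (hc : 0 ≤ c) :
    volume {z : EuclideanSpace ℝ (Fin 2) |
      z 1 ∈ Ioo a b ∧ z 0 ∈ Ioo (φ (z 1)) (φ (z 1) + c)} = ENNReal.ofReal ((b - a) * c) := by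
  have hset : {z : EuclideanSpace ℝ (Fin 2) |
      z 1 ∈ Ioo a b ∧ z 0 ∈ Ioo (φ (z 1)) (φ (z 1) + c)}
      = (fun z : EuclideanSpace ℝ (Fin 2) => (z 0, z 1)) ⁻¹'
        (Prod.swap ⁻¹' (regionBetween φ (fun p => φ p + c) (Ioo a b))) := by
    ext z; simp [regionBetween]
  have hms : MeasurableSet (regionBetween φ (fun p => φ p + c) (Ioo a b)) :=
    measurableSet_regionBetween hφ (hφ.add measurable_const) measurableSet_Ioo
  rw [hset, vp2.measure_preimage (hms.preimage measurable_swap).nullMeasurableSet]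
  have : volume (Prod.swap ⁻¹' (regionBetween φ (fun p => φ p + c) (Ioo a b)))
      = volume (regionBetween φ (fun p => φ p + c) (Ioo a b)) := by
    rw [Measure.volume_eq_prod]
    exact (Measure.measurePreserving_swap.measure_preimage hms.nullMeasurableSet).trans rfl
  rw [this, vol_region φ hφ a b c hc]

private lemma vol_box (l0 u0 l1 u1 : ℝ) :
    volume {z : EuclideanSpace ℝ (Fin 2) | z 0 ∈ Icc l0 u0 ∧ z 1 ∈ Icc l1 u1}
      = ENNReal.ofReal (u0 - l0) * ENNReal.ofReal (u1 - l1) := by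
  have hset : {z : EuclideanSpace ℝ (Fin 2) | z 0 ∈ Icc l0 u0 ∧ z 1 ∈ Icc l1 u1}
      = (fun z : EuclideanSpace ℝ (Fin 2) => (z 0, z 1)) ⁻¹' (Icc l0 u0 ×ˢ Icc l1 u1) := by
    ext z; simp; tauto
  rw [hset, vp2.measure_preimage
    ((measurableSet_Icc.prod measurableSet_Icc)).nullMeasurableSet,
    Measure.volume_eq_prod, Measure.prod_prod, Real.volume_Icc, Real.volume_Icc]

/-! small arithmetic auxiliaries (kept with minimal contexts so that
`nlinarith` stays fast) -/

private lemma aux_le_d {a b d : ℝ} (h : a^2 + b^2 = d^2) (hd : 0 ≤ d) : a ≤ d := by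
  nlinarith [sq_nonneg b, sq_nonneg (a - d), sq_nonneg (a + d)]

private lemma aux_ge_negd {a b d : ℝ} (h : a^2 + b^2 = d^2) (hd : 0 ≤ d) : -d ≤ a := by
  nlinarith [sq_nonneg b, sq_nonneg (a - d), sq_nonneg (a + d)]

private lemma aux_out {T G P s : ℝ} (hG0 : 0 ≤ G) (hG2 : G^2 = s^2 - P) (h : G < T) :
    s^2 < T^2 + P := by nlinarith [mul_pos (by linarith : (0:ℝ) < T - G) (by linarith : (0:ℝ) < T + G)]

private lemma slab_hin {s d G A V U : ℝ} (hU : U ≤ (G - d/4)^2)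
    (hG2 : G^2 = s^2 - (A+V)^2) (hA1 : A ≤ s/32) (hA2 : -(s/32) ≤ A)
    (hV1 : V ≤ d) (hV2 : -d ≤ V) (hGlb : 31*s/32 ≤ G)
    (hds : d ≤ s/8) (hd0 : 0 < d) (hs0 : 0 < s) : U + A^2 ≤ s^2 := by
  nlinarith [mul_nonneg (by linarith : (0:ℝ) ≤ s/32 - A) (by linarith : (0:ℝ) ≤ d - V),
    mul_nonneg (by linarith : (0:ℝ) ≤ s/32 + A) (by linarith : (0:ℝ) ≤ d + V),
    mul_nonneg (by linarith : (0:ℝ) ≤ G - 31*s/32) hd0.le,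
    mul_nonneg (by linarith : (0:ℝ) ≤ s/8 - d) hd0.le, sq_nonneg V]

private lemma box_hout {s d T W R V : ℝ} (hT1 : s*(9999/10000) - d/800 ≤ T)
    (hW : d/2 ≤ W) (hWd : W ≤ d) (hWV : W^2 + V^2 = d^2) (hR1 : 0 ≤ R) (hR2 : R ≤ s/100)
    (hV2 : -d ≤ V) (hdlo : s/8 ≤ d) (hdhi : d ≤ 2*s) (hs0 : 0 < s) :
    s^2 < (T + W)^2 + (R + V)^2 := by
  have hd0 : 0 < d := by linarith
  have hT0 : 0 < T := by linarith
  have ha0 : 0 < s*(9999/10000) - d/800 := by linarith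
  nlinarith [mul_nonneg hT0.le (by linarith : (0:ℝ) ≤ 2*W - d),
    mul_nonneg hR1 (by linarith : (0:ℝ) ≤ V + d),
    mul_nonneg (by linarith : (0:ℝ) ≤ T - (s*(9999/10000) - d/800))
      (by linarith : (0:ℝ) ≤ T + (s*(9999/10000) - d/800)),
    mul_nonneg (by linarith : (0:ℝ) ≤ T - (s*(9999/10000) - d/800)) hd0.le,
    mul_nonneg (by linarith : (0:ℝ) ≤ s/100 - R) (by linarith : (0:ℝ) ≤ d),
    mul_nonneg (by linarith : (0:ℝ) ≤ d - s/8) (by linarith : (0:ℝ) ≤ d),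
    mul_nonneg (by linarith : (0:ℝ) ≤ d - s/8) hs0.le,
    mul_pos hs0 hs0, sq_nonneg R]

private lemma aux_sqarg {s A : ℝ} (h1 : A ≤ 5*s/32) (h2 : -(5*s/32) ≤ A) :
    (31*s/32)^2 ≤ s^2 - A^2 := by nlinarith [mul_nonneg (by linarith : (0:ℝ) ≤ 5*s/32 - A) (by linarith : (0:ℝ) ≤ 5*s/32 + A)]

private lemma box_hin {s T R : ℝ} (hT1 : -(s*(9999/10000)) ≤ T) (hT2 : T ≤ s*(9999/10000))
    (hR1 : -(s/100) ≤ R) (hR2 : R ≤ s/100) (hs0 : 0 < s) : T^2 + R^2 ≤ s^2 := by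
  nlinarith [sq_le_sq' hT1 hT2, sq_le_sq' hR1 hR2, mul_pos hs0 hs0]

private lemma slab_subset {s d x0 x1 y0 y1 σ τ u p : ℝ}
    (hσ : σ = 1 ∨ σ = -1) (hτ : τ = 1 ∨ τ = -1)
    (hx0 : x0 ∈ Icc (0:ℝ) 1) (hx1 : x1 ∈ Icc (0:ℝ) 1)
    (hy0 : y0 ∈ Icc (0:ℝ) 1) (hy1 : y1 ∈ Icc (0:ℝ) 1)
    (hd2 : (y0 - x0)^2 + (y1 - x1)^2 = d^2)
    (hd0 : 0 < d) (hds : d ≤ s/8) (hs0 : 0 < s)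
    (hw : d/2 ≤ σ*(y0 - x0))
    (room0 : y0 + σ*s ∈ Icc (0:ℝ) 1) (room1 : y1 + τ*s ∈ Icc (0:ℝ) 1)
    (hp : τ*(p - y1) ∈ Ioo 0 (s/32))
    (hu : σ*(u - x0) - Real.sqrt (s^2 - (p - x1)^2) ∈ Ioo 0 (d/4)) :
    (u ∈ Icc (0:ℝ) 1 ∧ p ∈ Icc (0:ℝ) 1) ∧
    (u - y0)^2 + (p - y1)^2 ≤ s^2 ∧ s^2 < (u - x0)^2 + (p - x1)^2 := by
  obtain ⟨hy00, hy01⟩ := hy0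
  obtain ⟨hy10, hy11⟩ := hy1
  have hσ2 : σ^2 = 1 := by rcases hσ with h|h <;> rw [h] <;> norm_num
  have hτ2 : τ^2 = 1 := by rcases hτ with h|h <;> rw [h] <;> norm_num
  obtain ⟨hp1, hp2⟩ := hp
  obtain ⟨hu1, hu2⟩ := hu
  have hpy1 : p - y1 ≤ s/32 ∧ -(s/32) ≤ p - y1 := by
    rcases hτ with h|h <;> rw [h] at hp1 hp2 <;> constructor <;> linarith
  have hwsq : (σ*(y0-x0))^2 + (y1-x1)^2 = d^2 := by
    rw [mul_pow, hσ2, one_mul]; exact hd2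
  have hw0d : σ*(y0-x0) ≤ d := aux_le_d hwsq hd0.le
  have hw1a : y1 - x1 ≤ d := by
    have h' : (y1-x1)^2 + (σ*(y0-x0))^2 = d^2 := by linarith [hwsq]
    exact aux_le_d h' hd0.le
  have hw1b : -d ≤ y1 - x1 := by
    have h' : (y1-x1)^2 + (σ*(y0-x0))^2 = d^2 := by linarith [hwsq]
    exact aux_ge_negd h' hd0.le
  have hpxa : p - x1 ≤ 5*s/32 := by linarith [hpy1.1]
  have hpxb : -(5*s/32) ≤ p - x1 := by linarith [hpy1.2]
  set G := Real.sqrt (s^2 - (p - x1)^2) with hGdef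
  have hGarg : 0 ≤ s^2 - (p - x1)^2 := by
    have h := aux_sqarg hpxa hpxb
    nlinarith [sq_nonneg s]
  have hG2 : G^2 = s^2 - (p-x1)^2 := Real.sq_sqrt hGarg
  have hG0 : 0 ≤ G := Real.sqrt_nonneg _
  have hGlb : 31*s/32 ≤ G := by
    have h31 : (31*s/32)^2 ≤ s^2 - (p-x1)^2 := aux_sqarg hpxa hpxb
    calc 31*s/32 = Real.sqrt ((31*s/32)^2) := (Real.sqrt_sq (by positivity)).symm
      _ ≤ G := Real.sqrt_le_sqrt h31
  have hGub : G ≤ s := by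
    calc G ≤ Real.sqrt (s^2) := Real.sqrt_le_sqrt (by nlinarith [sq_nonneg (p-x1)])
      _ = s := Real.sqrt_sq hs0.le
  have ht2 : (u - x0)^2 = (σ*(u-x0))^2 := by rw [mul_pow, hσ2, one_mul]
  have hout : s^2 < (u - x0)^2 + (p - x1)^2 := by
    rw [ht2]
    exact aux_out hG0 hG2 (by linarith)
  have ha_ub : σ*(u-y0) ≤ G - d/4 := by
    have h : σ*(u-y0) = σ*(u-x0) - σ*(y0-x0) := by ring
    rw [h]; linarith
  have ha_lb : 0 < σ*(u-y0) := by
    have h : σ*(u-y0) = σ*(u-x0) - σ*(y0-x0) := by ring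
    rw [h]; linarith
  have hau2 : (u - y0)^2 = (σ*(u-y0))^2 := by rw [mul_pow, hσ2, one_mul]
  have hasq : (u - y0)^2 ≤ (G - d/4)^2 := by
    rw [hau2]
    exact sq_le_sq' (by linarith) ha_ub
  have hin : (u - y0)^2 + (p - y1)^2 ≤ s^2 := by
    have hAV : p - x1 = (p - y1) + (y1 - x1) := by ring
    have hG2' : G^2 = s^2 - ((p - y1) + (y1 - x1))^2 := by rw [← hAV]; exact hG2
    exact slab_hin hasq hG2' hpy1.1 hpy1.2 hw1a hw1b hGlb hds hd0 hs0
  refine ⟨⟨?_, ?_⟩, hin, hout⟩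
  · obtain ⟨hr0, hr1⟩ := room0
    rcases hσ with h|h <;> rw [h] at ha_ub ha_lb hr0 hr1 <;>
      exact ⟨by linarith, by linarith⟩
  · obtain ⟨hr0, hr1⟩ := room1
    rcases hτ with h|h <;> rw [h] at hp1 hp2 hr0 hr1 <;>
      exact ⟨by linarith, by linarith⟩

private lemma box_subset {s d x0 x1 y0 y1 σ τ u p : ℝ}
    (hσ : σ = 1 ∨ σ = -1) (hτ : τ = 1 ∨ τ = -1)
    (hx0 : x0 ∈ Icc (0:ℝ) 1) (hx1 : x1 ∈ Icc (0:ℝ) 1)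
    (hy0 : y0 ∈ Icc (0:ℝ) 1) (hy1 : y1 ∈ Icc (0:ℝ) 1)
    (hd2 : (y0 - x0)^2 + (y1 - x1)^2 = d^2)
    (hd0 : 0 < d) (hdlo : s/8 ≤ d) (hdhi : d ≤ 2*s) (hs0 : 0 < s)
    (hw : d/2 ≤ σ*(y0 - x0))
    (room0 : y0 + σ*s ∈ Icc (0:ℝ) 1) (room1 : y1 + τ*s ∈ Icc (0:ℝ) 1)
    (hu : σ*(u - y0) ∈ Icc (s*(9999/10000) - d/800) (s*(9999/10000)))
    (hp : τ*(p - y1) ∈ Icc 0 (s/100)) :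
    (u ∈ Icc (0:ℝ) 1 ∧ p ∈ Icc (0:ℝ) 1) ∧
    (u - y0)^2 + (p - y1)^2 ≤ s^2 ∧ s^2 < (u - x0)^2 + (p - x1)^2 := by
  obtain ⟨hy00, hy01⟩ := hy0
  obtain ⟨hy10, hy11⟩ := hy1
  have hσ2 : σ^2 = 1 := by rcases hσ with h|h <;> rw [h] <;> norm_num
  have hτ2 : τ^2 = 1 := by rcases hτ with h|h <;> rw [h] <;> norm_num
  obtain ⟨hu1, hu2⟩ := hu
  obtain ⟨hp1, hp2⟩ := hp
  have hWV : (σ*(y0-x0))^2 + (τ*(y1-x1))^2 = d^2 := by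
    rw [mul_pow, hσ2, mul_pow, hτ2, one_mul, one_mul]; exact hd2
  have hVWV : (τ*(y1-x1))^2 + (σ*(y0-x0))^2 = d^2 := by linarith [hWV]
  have hVa : τ*(y1-x1) ≤ d := aux_le_d hVWV hd0.le
  have hVb : -d ≤ τ*(y1-x1) := aux_ge_negd hVWV hd0.le
  have hWub : σ*(y0-x0) ≤ d := aux_le_d hWV hd0.le
  have hau2 : (u - y0)^2 = (σ*(u-y0))^2 := by rw [mul_pow, hσ2, one_mul]
  have hpy2 : (p - y1)^2 = (τ*(p-y1))^2 := by rw [mul_pow, hτ2, one_mul]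
  have hin : (u - y0)^2 + (p - y1)^2 ≤ s^2 := by
    rw [hau2, hpy2]
    refine box_hin ?_ hu2 (by linarith) hp2 hs0
    have : 0 < s*(9999/10000) - d/800 := by linarith
    linarith
  have e1 : (u - x0)^2 = (σ*(u-y0) + σ*(y0-x0))^2 := by
    have h : σ*(u-y0) + σ*(y0-x0) = σ*(u-x0) := by ring
    rw [h, mul_pow, hσ2, one_mul]
  have e2 : (p - x1)^2 = (τ*(p-y1) + τ*(y1-x1))^2 := by
    have h : τ*(p-y1) + τ*(y1-x1) = τ*(p-x1) := by ring
    rw [h, mul_pow, hτ2, one_mul]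
  have hout : s^2 < (u - x0)^2 + (p - x1)^2 := by
    rw [e1, e2]
    exact box_hout hu1 hw hWub hWV hp1 hp2 hVb hdlo hdhi hs0
  have htlb : 0 < σ*(u - y0) := by linarith
  refine ⟨⟨?_, ?_⟩, hin, hout⟩
  · obtain ⟨hr0, hr1⟩ := room0
    rcases hσ with h|h <;> rw [h] at hu1 hu2 hr0 hr1 htlb <;>
      exact ⟨by linarith, by linarith⟩
  · obtain ⟨hr0, hr1⟩ := room1
    rcases hτ with h|h <;> rw [h] at hp1 hp2 hr0 hr1 <;>
      exact ⟨by linarith, by linarith⟩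

private lemma pick_tau {t s : ℝ} (ht : t ∈ Icc (0:ℝ) 1) (hs0 : 0 < s) (hs1 : s ≤ 1/100) :
    ∃ τ : ℝ, (τ = 1 ∨ τ = -1) ∧ t + τ*s ∈ Icc (0:ℝ) 1 := by
  rcases le_total t (1/2) with h|h
  · obtain ⟨h1, h2⟩ := ht
    exact ⟨1, Or.inl rfl, ⟨by linarith, by linarith⟩⟩
  · obtain ⟨h1, h2⟩ := ht
    exact ⟨-1, Or.inr rfl, ⟨by linarith, by linarith⟩⟩

private lemma pick_interval {t s : ℝ} (ht : t ∈ Icc (0:ℝ) 1) (hs0 : 0 < s) (hs1 : s ≤ 1/100) :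
    ∃ l, 0 ≤ l ∧ l + s/2 ≤ 1 ∧ l ≤ t ∧ t ≤ l + s/2 := by
  rcases le_total t (1/2) with h|h
  · obtain ⟨h1, h2⟩ := ht
    exact ⟨t, h1, by linarith, le_refl t, by linarith⟩
  · obtain ⟨h1, h2⟩ := ht
    exact ⟨t - s/2, by linarith, by linarith, by linarith, by linarith⟩
private lemma fin2cases : ∀ k : Fin 2, k = 0 ∨ k = 1 := by decide

/-- Slab construction, fiber in coordinate 0, base in coordinate 1. -/
private lemma regime1_fiber0 {s d : ℝ} (x y : EuclideanSpace ℝ (Fin 2)) {σ τ : ℝ}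
    (hσ : σ = 1 ∨ σ = -1) (hτ : τ = 1 ∨ τ = -1)
    (hx : ∀ i, x i ∈ Icc (0:ℝ) 1) (hy : ∀ i, y i ∈ Icc (0:ℝ) 1)
    (hd2 : (y 0 - x 0)^2 + (y 1 - x 1)^2 = d^2)
    (hd0 : 0 < d) (hds : d ≤ s/8) (hs0 : 0 < s)
    (hw : d/2 ≤ σ*(y 0 - x 0))
    (room0 : y 0 + σ*s ∈ Icc (0:ℝ) 1) (room1 : y 1 + τ*s ∈ Icc (0:ℝ) 1) :
    ENNReal.ofReal (s/32 * (d/4)) ≤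
      volume (({z : EuclideanSpace ℝ (Fin 2) | ∀ i, z i ∈ Icc (0:ℝ) 1}
        ∩ Metric.closedBall y s) \ Metric.closedBall x s) := by
  have hsub : {z : EuclideanSpace ℝ (Fin 2) | τ*(z 1 - y 1) ∈ Ioo 0 (s/32) ∧
      σ*(z 0 - x 0) - Real.sqrt (s^2 - (z 1 - x 1)^2) ∈ Ioo 0 (d/4)} ⊆
      (({z : EuclideanSpace ℝ (Fin 2) | ∀ i, z i ∈ Icc (0:ℝ) 1}
        ∩ Metric.closedBall y s) \ Metric.closedBall x s) := by
    rintro z ⟨h1, h2⟩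
    obtain ⟨⟨hu01, hp01⟩, hin, hout⟩ :=
      slab_subset hσ hτ (hx 0) (hx 1) (hy 0) (hy 1) hd2 hd0 hds hs0 hw room0 room1 h1 h2
    refine ⟨⟨?_, ?_⟩, ?_⟩
    · intro i; rcases fin2cases i with h|h <;> subst h
      · exact hu01
      · exact hp01
    · rw [mem_cb_iff hs0.le]; exact hin
    · intro hmem; rw [mem_cb_iff hs0.le] at hmem; linarith
  refine le_trans (le_of_eq ?_) (measure_mono hsub)
  have hG : Measurable fun p : ℝ => Real.sqrt (s^2 - (p - x 1)^2) :=
    Real.continuous_sqrt.measurable.comp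
      (measurable_const.sub ((measurable_id.sub measurable_const).pow_const 2))
  rcases hσ with hσ1 | hσ1 <;> rcases hτ with hτ1 | hτ1 <;> subst hσ1 <;> subst hτ1
  · rw [show {z : EuclideanSpace ℝ (Fin 2) | (1:ℝ)*(z 1 - y 1) ∈ Ioo 0 (s/32) ∧
        (1:ℝ)*(z 0 - x 0) - Real.sqrt (s^2 - (z 1 - x 1)^2) ∈ Ioo 0 (d/4)}
        = {z : EuclideanSpace ℝ (Fin 2) | z 1 ∈ Ioo (y 1) (y 1 + s/32) ∧
          z 0 ∈ Ioo ((fun p => x 0 + Real.sqrt (s^2 - (p - x 1)^2)) (z 1))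
            ((fun p => x 0 + Real.sqrt (s^2 - (p - x 1)^2)) (z 1) + d/4)} by
      ext z; simp only [mem_setOf_eq, mem_Ioo]; constructor <;>
        rintro ⟨⟨a1,a2⟩,b1,b2⟩ <;> exact ⟨⟨by linarith, by linarith⟩, by linarith, by linarith⟩,
      vol_slab_base1 (fun p => x 0 + Real.sqrt (s^2 - (p - x 1)^2)) (by exact measurable_const.add hG) _ _ _ (by positivity)]
    rw [show y 1 + s/32 - y 1 = s/32 by ring]
  · rw [show {z : EuclideanSpace ℝ (Fin 2) | (-1:ℝ)*(z 1 - y 1) ∈ Ioo 0 (s/32) ∧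
        (1:ℝ)*(z 0 - x 0) - Real.sqrt (s^2 - (z 1 - x 1)^2) ∈ Ioo 0 (d/4)}
        = {z : EuclideanSpace ℝ (Fin 2) | z 1 ∈ Ioo (y 1 - s/32) (y 1) ∧
          z 0 ∈ Ioo ((fun p => x 0 + Real.sqrt (s^2 - (p - x 1)^2)) (z 1))
            ((fun p => x 0 + Real.sqrt (s^2 - (p - x 1)^2)) (z 1) + d/4)} by
      ext z; simp only [mem_setOf_eq, mem_Ioo]; constructor <;>
        rintro ⟨⟨a1,a2⟩,b1,b2⟩ <;> exact ⟨⟨by linarith, by linarith⟩, by linarith, by linarith⟩,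
      vol_slab_base1 (fun p => x 0 + Real.sqrt (s^2 - (p - x 1)^2)) (by exact measurable_const.add hG) _ _ _ (by positivity)]
    rw [show y 1 - (y 1 - s/32) = s/32 by ring]
  · rw [show {z : EuclideanSpace ℝ (Fin 2) | (1:ℝ)*(z 1 - y 1) ∈ Ioo 0 (s/32) ∧
        (-1:ℝ)*(z 0 - x 0) - Real.sqrt (s^2 - (z 1 - x 1)^2) ∈ Ioo 0 (d/4)}
        = {z : EuclideanSpace ℝ (Fin 2) | z 1 ∈ Ioo (y 1) (y 1 + s/32) ∧
          z 0 ∈ Ioo ((fun p => x 0 - Real.sqrt (s^2 - (p - x 1)^2) - d/4) (z 1))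
            ((fun p => x 0 - Real.sqrt (s^2 - (p - x 1)^2) - d/4) (z 1) + d/4)} by
      ext z; simp only [mem_setOf_eq, mem_Ioo]; constructor <;>
        rintro ⟨⟨a1,a2⟩,b1,b2⟩ <;> exact ⟨⟨by linarith, by linarith⟩, by linarith, by linarith⟩,
      vol_slab_base1 (fun p => x 0 - Real.sqrt (s^2 - (p - x 1)^2) - d/4) (by exact (measurable_const.sub hG).sub measurable_const) _ _ _ (by positivity)]
    rw [show y 1 + s/32 - y 1 = s/32 by ring]
  · rw [show {z : EuclideanSpace ℝ (Fin 2) | (-1:ℝ)*(z 1 - y 1) ∈ Ioo 0 (s/32) ∧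
        (-1:ℝ)*(z 0 - x 0) - Real.sqrt (s^2 - (z 1 - x 1)^2) ∈ Ioo 0 (d/4)}
        = {z : EuclideanSpace ℝ (Fin 2) | z 1 ∈ Ioo (y 1 - s/32) (y 1) ∧
          z 0 ∈ Ioo ((fun p => x 0 - Real.sqrt (s^2 - (p - x 1)^2) - d/4) (z 1))
            ((fun p => x 0 - Real.sqrt (s^2 - (p - x 1)^2) - d/4) (z 1) + d/4)} by
      ext z; simp only [mem_setOf_eq, mem_Ioo]; constructor <;>
        rintro ⟨⟨a1,a2⟩,b1,b2⟩ <;> exact ⟨⟨by linarith, by linarith⟩, by linarith, by linarith⟩,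
      vol_slab_base1 (fun p => x 0 - Real.sqrt (s^2 - (p - x 1)^2) - d/4) (by exact (measurable_const.sub hG).sub measurable_const) _ _ _ (by positivity)]
    rw [show y 1 - (y 1 - s/32) = s/32 by ring]
/-- Slab construction, fiber in coordinate 1, base in coordinate 0. -/
private lemma regime1_fiber1 {s d : ℝ} (x y : EuclideanSpace ℝ (Fin 2)) {σ τ : ℝ}
    (hσ : σ = 1 ∨ σ = -1) (hτ : τ = 1 ∨ τ = -1)
    (hx : ∀ i, x i ∈ Icc (0:ℝ) 1) (hy : ∀ i, y i ∈ Icc (0:ℝ) 1)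
    (hd2 : (y 0 - x 0)^2 + (y 1 - x 1)^2 = d^2)
    (hd0 : 0 < d) (hds : d ≤ s/8) (hs0 : 0 < s)
    (hw : d/2 ≤ σ*(y 1 - x 1))
    (room1 : y 1 + σ*s ∈ Icc (0:ℝ) 1) (room0 : y 0 + τ*s ∈ Icc (0:ℝ) 1) :
    ENNReal.ofReal (s/32 * (d/4)) ≤
      volume (({z : EuclideanSpace ℝ (Fin 2) | ∀ i, z i ∈ Icc (0:ℝ) 1}
        ∩ Metric.closedBall y s) \ Metric.closedBall x s) := by
  have hd2' : (y 1 - x 1)^2 + (y 0 - x 0)^2 = d^2 := by linarith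
  have hsub : {z : EuclideanSpace ℝ (Fin 2) | τ*(z 0 - y 0) ∈ Ioo 0 (s/32) ∧
      σ*(z 1 - x 1) - Real.sqrt (s^2 - (z 0 - x 0)^2) ∈ Ioo 0 (d/4)} ⊆
      (({z : EuclideanSpace ℝ (Fin 2) | ∀ i, z i ∈ Icc (0:ℝ) 1}
        ∩ Metric.closedBall y s) \ Metric.closedBall x s) := by
    rintro z ⟨h1, h2⟩
    obtain ⟨⟨hu01, hp01⟩, hin, hout⟩ :=
      slab_subset hσ hτ (hx 1) (hx 0) (hy 1) (hy 0) hd2' hd0 hds hs0 hw room1 room0 h1 h2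
    refine ⟨⟨?_, ?_⟩, ?_⟩
    · intro i; rcases fin2cases i with h|h <;> subst h
      · exact hp01
      · exact hu01
    · rw [mem_cb_iff hs0.le]; linarith
    · intro hmem; rw [mem_cb_iff hs0.le] at hmem; linarith
  refine le_trans (le_of_eq ?_) (measure_mono hsub)
  have hG : Measurable fun p : ℝ => Real.sqrt (s^2 - (p - x 0)^2) :=
    Real.continuous_sqrt.measurable.comp
      (measurable_const.sub ((measurable_id.sub measurable_const).pow_const 2))
  rcases hσ with hσ1 | hσ1 <;> rcases hτ with hτ1 | hτ1 <;> subst hσ1 <;> subst hτ1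
  · rw [show {z : EuclideanSpace ℝ (Fin 2) | (1:ℝ)*(z 0 - y 0) ∈ Ioo 0 (s/32) ∧
        (1:ℝ)*(z 1 - x 1) - Real.sqrt (s^2 - (z 0 - x 0)^2) ∈ Ioo 0 (d/4)}
        = {z : EuclideanSpace ℝ (Fin 2) | z 0 ∈ Ioo (y 0) (y 0 + s/32) ∧
          z 1 ∈ Ioo ((fun p => x 1 + Real.sqrt (s^2 - (p - x 0)^2)) (z 0))
            ((fun p => x 1 + Real.sqrt (s^2 - (p - x 0)^2)) (z 0) + d/4)} by
      ext z; simp only [mem_setOf_eq, mem_Ioo]; constructor <;>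
        rintro ⟨⟨a1,a2⟩,b1,b2⟩ <;> exact ⟨⟨by linarith, by linarith⟩, by linarith, by linarith⟩,
      vol_slab_base0 (fun p => x 1 + Real.sqrt (s^2 - (p - x 0)^2)) (by exact measurable_const.add hG) _ _ _ (by positivity)]
    rw [show y 0 + s/32 - y 0 = s/32 by ring]
  · rw [show {z : EuclideanSpace ℝ (Fin 2) | (-1:ℝ)*(z 0 - y 0) ∈ Ioo 0 (s/32) ∧
        (1:ℝ)*(z 1 - x 1) - Real.sqrt (s^2 - (z 0 - x 0)^2) ∈ Ioo 0 (d/4)}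
        = {z : EuclideanSpace ℝ (Fin 2) | z 0 ∈ Ioo (y 0 - s/32) (y 0) ∧
          z 1 ∈ Ioo ((fun p => x 1 + Real.sqrt (s^2 - (p - x 0)^2)) (z 0))
            ((fun p => x 1 + Real.sqrt (s^2 - (p - x 0)^2)) (z 0) + d/4)} by
      ext z; simp only [mem_setOf_eq, mem_Ioo]; constructor <;>
        rintro ⟨⟨a1,a2⟩,b1,b2⟩ <;> exact ⟨⟨by linarith, by linarith⟩, by linarith, by linarith⟩,
      vol_slab_base0 (fun p => x 1 + Real.sqrt (s^2 - (p - x 0)^2)) (by exact measurable_const.add hG) _ _ _ (by positivity)]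
    rw [show y 0 - (y 0 - s/32) = s/32 by ring]
  · rw [show {z : EuclideanSpace ℝ (Fin 2) | (1:ℝ)*(z 0 - y 0) ∈ Ioo 0 (s/32) ∧
        (-1:ℝ)*(z 1 - x 1) - Real.sqrt (s^2 - (z 0 - x 0)^2) ∈ Ioo 0 (d/4)}
        = {z : EuclideanSpace ℝ (Fin 2) | z 0 ∈ Ioo (y 0) (y 0 + s/32) ∧
          z 1 ∈ Ioo ((fun p => x 1 - Real.sqrt (s^2 - (p - x 0)^2) - d/4) (z 0))
            ((fun p => x 1 - Real.sqrt (s^2 - (p - x 0)^2) - d/4) (z 0) + d/4)} by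
      ext z; simp only [mem_setOf_eq, mem_Ioo]; constructor <;>
        rintro ⟨⟨a1,a2⟩,b1,b2⟩ <;> exact ⟨⟨by linarith, by linarith⟩, by linarith, by linarith⟩,
      vol_slab_base0 (fun p => x 1 - Real.sqrt (s^2 - (p - x 0)^2) - d/4) (by exact (measurable_const.sub hG).sub measurable_const) _ _ _ (by positivity)]
    rw [show y 0 + s/32 - y 0 = s/32 by ring]
  · rw [show {z : EuclideanSpace ℝ (Fin 2) | (-1:ℝ)*(z 0 - y 0) ∈ Ioo 0 (s/32) ∧
        (-1:ℝ)*(z 1 - x 1) - Real.sqrt (s^2 - (z 0 - x 0)^2) ∈ Ioo 0 (d/4)}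
        = {z : EuclideanSpace ℝ (Fin 2) | z 0 ∈ Ioo (y 0 - s/32) (y 0) ∧
          z 1 ∈ Ioo ((fun p => x 1 - Real.sqrt (s^2 - (p - x 0)^2) - d/4) (z 0))
            ((fun p => x 1 - Real.sqrt (s^2 - (p - x 0)^2) - d/4) (z 0) + d/4)} by
      ext z; simp only [mem_setOf_eq, mem_Ioo]; constructor <;>
        rintro ⟨⟨a1,a2⟩,b1,b2⟩ <;> exact ⟨⟨by linarith, by linarith⟩, by linarith, by linarith⟩,
      vol_slab_base0 (fun p => x 1 - Real.sqrt (s^2 - (p - x 0)^2) - d/4) (by exact (measurable_const.sub hG).sub measurable_const) _ _ _ (by positivity)]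
    rw [show y 0 - (y 0 - s/32) = s/32 by ring]
/-- Box construction, main direction coordinate 0. -/
private lemma regime2_fiber0 {s d : ℝ} (x y : EuclideanSpace ℝ (Fin 2)) {σ τ : ℝ}
    (hσ : σ = 1 ∨ σ = -1) (hτ : τ = 1 ∨ τ = -1)
    (hx : ∀ i, x i ∈ Icc (0:ℝ) 1) (hy : ∀ i, y i ∈ Icc (0:ℝ) 1)
    (hd2 : (y 0 - x 0)^2 + (y 1 - x 1)^2 = d^2)
    (hd0 : 0 < d) (hdlo : s/8 ≤ d) (hdhi : d ≤ 2*s) (hs0 : 0 < s)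
    (hw : d/2 ≤ σ*(y 0 - x 0))
    (room0 : y 0 + σ*s ∈ Icc (0:ℝ) 1) (room1 : y 1 + τ*s ∈ Icc (0:ℝ) 1) :
    ENNReal.ofReal (d/800 * (s/100)) ≤
      volume (({z : EuclideanSpace ℝ (Fin 2) | ∀ i, z i ∈ Icc (0:ℝ) 1}
        ∩ Metric.closedBall y s) \ Metric.closedBall x s) := by
  have hsub : {z : EuclideanSpace ℝ (Fin 2) |
      σ*(z 0 - y 0) ∈ Icc (s*(9999/10000) - d/800) (s*(9999/10000)) ∧
      τ*(z 1 - y 1) ∈ Icc 0 (s/100)} ⊆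
      (({z : EuclideanSpace ℝ (Fin 2) | ∀ i, z i ∈ Icc (0:ℝ) 1}
        ∩ Metric.closedBall y s) \ Metric.closedBall x s) := by
    rintro z ⟨h1, h2⟩
    obtain ⟨⟨hu01, hp01⟩, hin, hout⟩ :=
      box_subset hσ hτ (hx 0) (hx 1) (hy 0) (hy 1) hd2 hd0 hdlo hdhi hs0 hw room0 room1 h1 h2
    refine ⟨⟨?_, ?_⟩, ?_⟩
    · intro i; rcases fin2cases i with h|h <;> subst h
      · exact hu01
      · exact hp01
    · rw [mem_cb_iff hs0.le]; exact hin
    · intro hmem; rw [mem_cb_iff hs0.le] at hmem; linarith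
  refine le_trans (le_of_eq ?_) (measure_mono hsub)
  have harea : ENNReal.ofReal (d/800 * (s/100))
      = ENNReal.ofReal (d/800) * ENNReal.ofReal (s/100) :=
    ENNReal.ofReal_mul (by positivity)
  rcases hσ with hσ1 | hσ1 <;> rcases hτ with hτ1 | hτ1 <;> subst hσ1 <;> subst hτ1
  · rw [show {z : EuclideanSpace ℝ (Fin 2) |
        (1:ℝ)*(z 0 - y 0) ∈ Icc (s*(9999/10000) - d/800) (s*(9999/10000)) ∧
        (1:ℝ)*(z 1 - y 1) ∈ Icc 0 (s/100)}
        = {z : EuclideanSpace ℝ (Fin 2) |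
            z 0 ∈ Icc (y 0 + (s*(9999/10000) - d/800)) (y 0 + s*(9999/10000)) ∧
            z 1 ∈ Icc (y 1) (y 1 + s/100)} by
      ext z; simp only [mem_setOf_eq, mem_Icc]; constructor <;>
        rintro ⟨⟨a1,a2⟩,b1,b2⟩ <;> exact ⟨⟨by linarith, by linarith⟩, by linarith, by linarith⟩,
      vol_box, harea]
    congr 2 <;> ring
  · rw [show {z : EuclideanSpace ℝ (Fin 2) |
        (1:ℝ)*(z 0 - y 0) ∈ Icc (s*(9999/10000) - d/800) (s*(9999/10000)) ∧
        (-1:ℝ)*(z 1 - y 1) ∈ Icc 0 (s/100)}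
        = {z : EuclideanSpace ℝ (Fin 2) |
            z 0 ∈ Icc (y 0 + (s*(9999/10000) - d/800)) (y 0 + s*(9999/10000)) ∧
            z 1 ∈ Icc (y 1 - s/100) (y 1)} by
      ext z; simp only [mem_setOf_eq, mem_Icc]; constructor <;>
        rintro ⟨⟨a1,a2⟩,b1,b2⟩ <;> exact ⟨⟨by linarith, by linarith⟩, by linarith, by linarith⟩,
      vol_box, harea]
    congr 2 <;> ring
  · rw [show {z : EuclideanSpace ℝ (Fin 2) |
        (-1:ℝ)*(z 0 - y 0) ∈ Icc (s*(9999/10000) - d/800) (s*(9999/10000)) ∧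
        (1:ℝ)*(z 1 - y 1) ∈ Icc 0 (s/100)}
        = {z : EuclideanSpace ℝ (Fin 2) |
            z 0 ∈ Icc (y 0 - s*(9999/10000)) (y 0 - (s*(9999/10000) - d/800)) ∧
            z 1 ∈ Icc (y 1) (y 1 + s/100)} by
      ext z; simp only [mem_setOf_eq, mem_Icc]; constructor <;>
        rintro ⟨⟨a1,a2⟩,b1,b2⟩ <;> exact ⟨⟨by linarith, by linarith⟩, by linarith, by linarith⟩,
      vol_box, harea]
    congr 2 <;> ring
  · rw [show {z : EuclideanSpace ℝ (Fin 2) |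
        (-1:ℝ)*(z 0 - y 0) ∈ Icc (s*(9999/10000) - d/800) (s*(9999/10000)) ∧
        (-1:ℝ)*(z 1 - y 1) ∈ Icc 0 (s/100)}
        = {z : EuclideanSpace ℝ (Fin 2) |
            z 0 ∈ Icc (y 0 - s*(9999/10000)) (y 0 - (s*(9999/10000) - d/800)) ∧
            z 1 ∈ Icc (y 1 - s/100) (y 1)} by
      ext z; simp only [mem_setOf_eq, mem_Icc]; constructor <;>
        rintro ⟨⟨a1,a2⟩,b1,b2⟩ <;> exact ⟨⟨by linarith, by linarith⟩, by linarith, by linarith⟩,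
      vol_box, harea]
    congr 2 <;> ring

/-- Box construction, main direction coordinate 1. -/
private lemma regime2_fiber1 {s d : ℝ} (x y : EuclideanSpace ℝ (Fin 2)) {σ τ : ℝ}
    (hσ : σ = 1 ∨ σ = -1) (hτ : τ = 1 ∨ τ = -1)
    (hx : ∀ i, x i ∈ Icc (0:ℝ) 1) (hy : ∀ i, y i ∈ Icc (0:ℝ) 1)
    (hd2 : (y 0 - x 0)^2 + (y 1 - x 1)^2 = d^2)
    (hd0 : 0 < d) (hdlo : s/8 ≤ d) (hdhi : d ≤ 2*s) (hs0 : 0 < s)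
    (hw : d/2 ≤ σ*(y 1 - x 1))
    (room1 : y 1 + σ*s ∈ Icc (0:ℝ) 1) (room0 : y 0 + τ*s ∈ Icc (0:ℝ) 1) :
    ENNReal.ofReal (d/800 * (s/100)) ≤
      volume (({z : EuclideanSpace ℝ (Fin 2) | ∀ i, z i ∈ Icc (0:ℝ) 1}
        ∩ Metric.closedBall y s) \ Metric.closedBall x s) := by
  have hd2' : (y 1 - x 1)^2 + (y 0 - x 0)^2 = d^2 := by linarith
  have hsub : {z : EuclideanSpace ℝ (Fin 2) |
      σ*(z 1 - y 1) ∈ Icc (s*(9999/10000) - d/800) (s*(9999/10000)) ∧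
      τ*(z 0 - y 0) ∈ Icc 0 (s/100)} ⊆
      (({z : EuclideanSpace ℝ (Fin 2) | ∀ i, z i ∈ Icc (0:ℝ) 1}
        ∩ Metric.closedBall y s) \ Metric.closedBall x s) := by
    rintro z ⟨h1, h2⟩
    obtain ⟨⟨hu01, hp01⟩, hin, hout⟩ :=
      box_subset hσ hτ (hx 1) (hx 0) (hy 1) (hy 0) hd2' hd0 hdlo hdhi hs0 hw room1 room0 h1 h2
    refine ⟨⟨?_, ?_⟩, ?_⟩
    · intro i; rcases fin2cases i with h|h <;> subst h
      · exact hp01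
      · exact hu01
    · rw [mem_cb_iff hs0.le]; linarith
    · intro hmem; rw [mem_cb_iff hs0.le] at hmem; linarith
  refine le_trans (le_of_eq ?_) (measure_mono hsub)
  have harea : ENNReal.ofReal (d/800 * (s/100))
      = ENNReal.ofReal (s/100) * ENNReal.ofReal (d/800) := by
    rw [← ENNReal.ofReal_mul (by positivity)]; congr 1; ring
  rcases hσ with hσ1 | hσ1 <;> rcases hτ with hτ1 | hτ1 <;> subst hσ1 <;> subst hτ1
  · rw [show {z : EuclideanSpace ℝ (Fin 2) |
        (1:ℝ)*(z 1 - y 1) ∈ Icc (s*(9999/10000) - d/800) (s*(9999/10000)) ∧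
        (1:ℝ)*(z 0 - y 0) ∈ Icc 0 (s/100)}
        = {z : EuclideanSpace ℝ (Fin 2) |
            z 0 ∈ Icc (y 0) (y 0 + s/100) ∧
            z 1 ∈ Icc (y 1 + (s*(9999/10000) - d/800)) (y 1 + s*(9999/10000))} by
      ext z; simp only [mem_setOf_eq, mem_Icc]; constructor <;>
        rintro ⟨⟨a1,a2⟩,b1,b2⟩ <;> exact ⟨⟨by linarith, by linarith⟩, by linarith, by linarith⟩,
      vol_box, harea]
    congr 2 <;> ring
  · rw [show {z : EuclideanSpace ℝ (Fin 2) |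
        (1:ℝ)*(z 1 - y 1) ∈ Icc (s*(9999/10000) - d/800) (s*(9999/10000)) ∧
        (-1:ℝ)*(z 0 - y 0) ∈ Icc 0 (s/100)}
        = {z : EuclideanSpace ℝ (Fin 2) |
            z 0 ∈ Icc (y 0 - s/100) (y 0) ∧
            z 1 ∈ Icc (y 1 + (s*(9999/10000) - d/800)) (y 1 + s*(9999/10000))} by
      ext z; simp only [mem_setOf_eq, mem_Icc]; constructor <;>
        rintro ⟨⟨a1,a2⟩,b1,b2⟩ <;> exact ⟨⟨by linarith, by linarith⟩, by linarith, by linarith⟩,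
      vol_box, harea]
    congr 2 <;> ring
  · rw [show {z : EuclideanSpace ℝ (Fin 2) |
        (-1:ℝ)*(z 1 - y 1) ∈ Icc (s*(9999/10000) - d/800) (s*(9999/10000)) ∧
        (1:ℝ)*(z 0 - y 0) ∈ Icc 0 (s/100)}
        = {z : EuclideanSpace ℝ (Fin 2) |
            z 0 ∈ Icc (y 0) (y 0 + s/100) ∧
            z 1 ∈ Icc (y 1 - s*(9999/10000)) (y 1 - (s*(9999/10000) - d/800))} by
      ext z; simp only [mem_setOf_eq, mem_Icc]; constructor <;>
        rintro ⟨⟨a1,a2⟩,b1,b2⟩ <;> exact ⟨⟨by linarith, by linarith⟩, by linarith, by linarith⟩,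
      vol_box, harea]
    congr 2 <;> ring
  · rw [show {z : EuclideanSpace ℝ (Fin 2) |
        (-1:ℝ)*(z 1 - y 1) ∈ Icc (s*(9999/10000) - d/800) (s*(9999/10000)) ∧
        (-1:ℝ)*(z 0 - y 0) ∈ Icc 0 (s/100)}
        = {z : EuclideanSpace ℝ (Fin 2) |
            z 0 ∈ Icc (y 0 - s/100) (y 0) ∧
            z 1 ∈ Icc (y 1 - s*(9999/10000)) (y 1 - (s*(9999/10000) - d/800))} by
      ext z; simp only [mem_setOf_eq, mem_Icc]; constructor <;>
        rintro ⟨⟨a1,a2⟩,b1,b2⟩ <;> exact ⟨⟨by linarith, by linarith⟩, by linarith, by linarith⟩,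
      vol_box, harea]
    congr 2 <;> ring

/-- Far regime: the two balls are disjoint. -/
private lemma regime3 {s d : ℝ} (x y : EuclideanSpace ℝ (Fin 2))
    (hx : ∀ i, x i ∈ Icc (0:ℝ) 1) (hy : ∀ i, y i ∈ Icc (0:ℝ) 1)
    (hd2 : (y 0 - x 0)^2 + (y 1 - x 1)^2 = d^2)
    (hdlo : 2*s < d) (hs0 : 0 < s) (hs1 : s ≤ 1/100) :
    ENNReal.ofReal (s/2 * (s/2)) ≤
      volume (({z : EuclideanSpace ℝ (Fin 2) | ∀ i, z i ∈ Icc (0:ℝ) 1}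
        ∩ Metric.closedBall y s) \ Metric.closedBall x s) := by
  obtain ⟨l0, hl00, hl01, hl02, hl03⟩ := pick_interval (hy 0) hs0 hs1
  obtain ⟨l1, hl10, hl11, hl12, hl13⟩ := pick_interval (hy 1) hs0 hs1
  have hsub : {z : EuclideanSpace ℝ (Fin 2) |
      z 0 ∈ Icc l0 (l0 + s/2) ∧ z 1 ∈ Icc l1 (l1 + s/2)} ⊆
      (({z : EuclideanSpace ℝ (Fin 2) | ∀ i, z i ∈ Icc (0:ℝ) 1}
        ∩ Metric.closedBall y s) \ Metric.closedBall x s) := by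
    rintro z ⟨⟨h00, h01⟩, h10, h11⟩
    have hz0 : (z 0 - y 0)^2 ≤ (s/2)^2 :=
      sq_le_sq' (by linarith) (by linarith)
    have hz1 : (z 1 - y 1)^2 ≤ (s/2)^2 :=
      sq_le_sq' (by linarith) (by linarith)
    refine ⟨⟨?_, ?_⟩, ?_⟩
    · intro i; rcases fin2cases i with h|h <;> subst h
      · exact ⟨by linarith, by linarith⟩
      · exact ⟨by linarith, by linarith⟩
    · rw [mem_cb_iff hs0.le]; nlinarith
    · intro hmem
      rw [mem_cb_iff hs0.le] at hmem
      nlinarith [sq_nonneg ((z 0 - x 0) - (y 0 - z 0)), sq_nonneg ((z 1 - x 1) - (y 1 - z 1)),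
        mul_pos hs0 hs0]
  refine le_trans (le_of_eq ?_) (measure_mono hsub)
  rw [vol_box, show l0 + s/2 - l0 = s/2 from by ring, show l1 + s/2 - l1 = s/2 from by ring,
    ← ENNReal.ofReal_mul (by positivity)]
private lemma cornerL1Dist_eq (x : EuclideanSpace ℝ (Fin 2))
    (hx : ∀ i, x i ∈ Icc (0:ℝ) 1) :
    cornerL1Dist x = min (x 0) (1 - x 0) + min (x 1) (1 - x 1) := by
  obtain ⟨h00, h01⟩ := hx 0
  obtain ⟨h10, h11⟩ := hx 1
  unfold cornerL1Dist
  have e1 : |x 0 - 0| = x 0 := by rw [sub_zero, abs_of_nonneg h00]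
  have e2 : |x 0 - 1| = 1 - x 0 := by rw [abs_of_nonpos (by linarith), neg_sub]
  have e3 : |x 1 - 0| = x 1 := by rw [sub_zero, abs_of_nonneg h10]
  have e4 : |x 1 - 1| = 1 - x 1 := by rw [abs_of_nonpos (by linarith), neg_sub]
  rw [e1, e2, e3, e4, min_add_add_left, min_add_add_left, min_add_add_right]

/-- Volume lower bounds for `A ∩ B_s(y) \ B_s(x)` in the unit square `A = [0,1]²`,
when `x ≺ y`: of order `s²` when `‖y-x‖ ≥ s`, and of order `s ‖y-x‖` when
`‖y-x‖ ≤ 3s`. -/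
theorem stmt_9 :
    ∃ δ₁ > (0 : ℝ), ∃ s₀ > (0 : ℝ),
      ∀ s : ℝ, 0 < s → s < s₀ →
      ∀ x y : EuclideanSpace ℝ (Fin 2),
        (∀ i, x i ∈ Set.Icc (0 : ℝ) 1) → (∀ i, y i ∈ Set.Icc (0 : ℝ) 1) →
        squarePrec x y →
        ((s ≤ ‖y - x‖ →
          ENNReal.ofReal (2 * δ₁ * s ^ 2)
            ≤ volume (({z : EuclideanSpace ℝ (Fin 2) | ∀ i, z i ∈ Set.Icc (0 : ℝ) 1}
                ∩ Metric.closedBall y s) \ Metric.closedBall x s))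
        ∧ (‖y - x‖ ≤ 3 * s →
          ENNReal.ofReal (2 * δ₁ * s * ‖y - x‖)
            ≤ volume (({z : EuclideanSpace ℝ (Fin 2) | ∀ i, z i ∈ Set.Icc (0 : ℝ) 1}
                ∩ Metric.closedBall y s) \ Metric.closedBall x s))) := by
  refine ⟨1/160000, by norm_num, 1/100, by norm_num, ?_⟩
  intro s hs0 hs1 x y hx hy hprec
  have hs1' : s ≤ 1/100 := le_of_lt hs1
  have hd2 : (y 0 - x 0)^2 + (y 1 - x 1)^2 = ‖y - x‖^2 := by
    rw [EuclideanSpace.norm_eq, Fin.sum_univ_two, Real.sq_sqrt (by positivity)]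
    simp [sq_abs]
  have hd0 : 0 < ‖y - x‖ := by
    rcases eq_or_lt_of_le (norm_nonneg (y - x)) with h | h
    · exfalso
      have h1 : y - x = 0 := norm_eq_zero.mp h.symm
      have hxy : y = x := sub_eq_zero.mp h1
      rw [hxy] at hprec
      rcases hprec with hl | ⟨_, hlex⟩
      · exact lt_irrefl _ hl
      · rcases hlex with h' | ⟨_, h''⟩
        · exact lt_irrefl _ h'
        · exact lt_irrefl _ h''
    · exact h
  have hgle : cornerL1Dist x ≤ cornerL1Dist y := by
    rcases hprec with h | ⟨h, _⟩
    · exact h.le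
    · exact h.le
  have hgle' : min (x 0) (1-x 0) + min (x 1) (1-x 1)
      ≤ min (y 0) (1-y 0) + min (y 1) (1-y 1) := by
    rw [← cornerL1Dist_eq x hx, ← cornerL1Dist_eq y hy]; exact hgle
  obtain ⟨hy00, hy01⟩ := hy 0
  obtain ⟨hy10, hy11⟩ := hy 1
  -- regime 1 : d ≤ s/8 (thin slab along the circle)
  have hbound1 : ‖y - x‖ ≤ s/8 →
      ENNReal.ofReal (s/32 * (‖y - x‖/4)) ≤
      volume (({z : EuclideanSpace ℝ (Fin 2) | ∀ i, z i ∈ Set.Icc (0 : ℝ) 1}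
        ∩ Metric.closedBall y s) \ Metric.closedBall x s) := by
    intro hc8
    have hdir := dir_lemma (hx 0) (hx 1) (hy 0) (hy 1) hgle' hd2 hd0
      (by linarith) hs0 hs1'
    rcases hdir with ⟨hw, hroom⟩ | ⟨hw, hroom⟩ | ⟨hw, hroom⟩ | ⟨hw, hroom⟩
    · obtain ⟨τ, hτ, hτr⟩ := pick_tau (hy 1) hs0 hs1'
      exact regime1_fiber0 x y (Or.inl rfl) hτ hx hy hd2 hd0 hc8 hs0
        (by linarith) ⟨by linarith, by linarith⟩ hτr
    · obtain ⟨τ, hτ, hτr⟩ := pick_tau (hy 1) hs0 hs1'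
      exact regime1_fiber0 x y (Or.inr rfl) hτ hx hy hd2 hd0 hc8 hs0
        (by linarith) ⟨by linarith, by linarith⟩ hτr
    · obtain ⟨τ, hτ, hτr⟩ := pick_tau (hy 0) hs0 hs1'
      exact regime1_fiber1 x y (Or.inl rfl) hτ hx hy hd2 hd0 hc8 hs0
        (by linarith) ⟨by linarith, by linarith⟩ hτr
    · obtain ⟨τ, hτ, hτr⟩ := pick_tau (hy 0) hs0 hs1'
      exact regime1_fiber1 x y (Or.inr rfl) hτ hx hy hd2 hd0 hc8 hs0
        (by linarith) ⟨by linarith, by linarith⟩ hτr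
  -- regime 2 : s/8 ≤ d ≤ 2s (box)
  have hbound2 : s/8 ≤ ‖y - x‖ → ‖y - x‖ ≤ 2*s →
      ENNReal.ofReal (‖y - x‖/800 * (s/100)) ≤
      volume (({z : EuclideanSpace ℝ (Fin 2) | ∀ i, z i ∈ Set.Icc (0 : ℝ) 1}
        ∩ Metric.closedBall y s) \ Metric.closedBall x s) := by
    intro hc8 hc2
    have hdir := dir_lemma (hx 0) (hx 1) (hy 0) (hy 1) hgle' hd2 hd0 hc2 hs0 hs1'
    rcases hdir with ⟨hw, hroom⟩ | ⟨hw, hroom⟩ | ⟨hw, hroom⟩ | ⟨hw, hroom⟩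
    · obtain ⟨τ, hτ, hτr⟩ := pick_tau (hy 1) hs0 hs1'
      exact regime2_fiber0 x y (Or.inl rfl) hτ hx hy hd2 hd0 hc8 hc2 hs0
        (by linarith) ⟨by linarith, by linarith⟩ hτr
    · obtain ⟨τ, hτ, hτr⟩ := pick_tau (hy 1) hs0 hs1'
      exact regime2_fiber0 x y (Or.inr rfl) hτ hx hy hd2 hd0 hc8 hc2 hs0
        (by linarith) ⟨by linarith, by linarith⟩ hτr
    · obtain ⟨τ, hτ, hτr⟩ := pick_tau (hy 0) hs0 hs1'
      exact regime2_fiber1 x y (Or.inl rfl) hτ hx hy hd2 hd0 hc8 hc2 hs0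
        (by linarith) ⟨by linarith, by linarith⟩ hτr
    · obtain ⟨τ, hτ, hτr⟩ := pick_tau (hy 0) hs0 hs1'
      exact regime2_fiber1 x y (Or.inr rfl) hτ hx hy hd2 hd0 hc8 hc2 hs0
        (by linarith) ⟨by linarith, by linarith⟩ hτr
  constructor
  · intro hsd
    rcases le_or_gt ‖y - x‖ (2*s) with hc | hc
    · refine le_trans (ENNReal.ofReal_le_ofReal ?_) (hbound2 (by linarith) hc)
      nlinarith
    · refine le_trans (ENNReal.ofReal_le_ofReal ?_) (regime3 x y hx hy hd2 hc hs0 hs1')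
      nlinarith
  · intro h3s
    rcases le_or_gt ‖y - x‖ (2*s) with hc | hc
    · rcases le_or_gt ‖y - x‖ (s/8) with hc8 | hc8
      · refine le_trans (ENNReal.ofReal_le_ofReal ?_) (hbound1 hc8)
        nlinarith
      · refine le_trans (ENNReal.ofReal_le_ofReal ?_) (hbound2 hc8.le hc)
        nlinarith
    · refine le_trans (ENNReal.ofReal_le_ofReal ?_) (regime3 x y hx hy hd2 hc hs0 hs1')
      nlinarith
end
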